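/- Assume moreover that $K$ has characteristic different from $2$, and suppose $\sigma$ is a $K$-algebra endomorphism of $L$ such that $\sigma(y_n) = \frac{P_{n-2}}{P_{n-1}} \cdot \frac{F_{n-1}}{y_{n-1}}$ for all $n \in \mathbb{Z}/m\mathbb{Z}$. Let $\mathcal{Z}$ be the subfield of $L$ generated by $K$ and the elements $z_n$, $n \in \mathbb{Z}/m\mathbb{Z}$. Then the fixed field $\{f \in L : \sigma(f) = f\}$ equals $\mathcal{Z}$, and the field extension degree $[L : \mathcal{Z}]$ equals $2$. -/

import Mathlib

/- Setting: `Lm K m` is the field of fractions of the (Laurent) polynomial ring over a field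
`K` in commuting variables `yv n` indexed by `n : ZMod m`, with fixed scalars `F n : K`. -/

noncomputable section

variable (K : Type) [Field K] (m : ℕ) [NeZero m]

/-- The ambient field `L`. -/
abbrev Lm := FractionRing (MvPolynomial (ZMod m) K)

/-- The variable `y_n`. -/
def yv (n : ZMod m) : Lm K m :=
  algebraMap (MvPolynomial (ZMod m) K) (Lm K m) (MvPolynomial.X n)

variable (F : ZMod m → K)

/-- The scalar `F_n` viewed inside `L`. -/
def Fc (n : ZMod m) : Lm K m := algebraMap K (Lm K m) (F n)

/-- `X_n = F_n / (y_n y_{n+1})`. -/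
def Xv (n : ZMod m) : Lm K m := Fc K m F n / (yv K m n * yv K m (n + 1))

/-- `P_n = 1 + ∑_{k=0}^{m-2} X_n X_{n-1} ⋯ X_{n-k}`. -/
def Pv (n : ZMod m) : Lm K m :=
  1 + ∑ k ∈ Finset.range (m - 1), ∏ j ∈ Finset.range (k + 1), Xv K m F (n - (j : ZMod m))

/-- `z_n = y_n (1 + X_n)`. -/
def zv (n : ZMod m) : Lm K m := yv K m n * (1 + Xv K m F n)

/-- `𝐲 = ∏_n y_n`. -/
def boldy : Lm K m := ∏ n : ZMod m, yv K m n

/-- `𝐅 = ∏_n F_n` (viewed in `L`). -/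
def boldF : Lm K m := ∏ n : ZMod m, Fc K m F n

/-- `δ = 𝐲 - 𝐅/𝐲`. -/
def deltav : Lm K m := boldy K m - boldF K m F / boldy K m

set_option linter.unusedSectionVars false
section Aux

variable {K : Type} [Field K] {m : ℕ} [NeZero m] (F : ZMod m → K)

lemma yv_ne (n : ZMod m) : yv K m n ≠ 0 := by
  simp only [yv]
  rw [map_ne_zero_iff _ (IsFractionRing.injective (MvPolynomial (ZMod m) K) (Lm K m))]
  exact MvPolynomial.X_ne_zero n

lemma Fc_ne (hF : ∀ n, F n ≠ 0) (n : ZMod m) : Fc K m F n ≠ 0 := by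
  simp only [Fc]
  exact fun h => hF n ((map_eq_zero _).mp h)

lemma zv_eq (n : ZMod m) :
    zv K m F n = yv K m n + Fc K m F n / yv K m (n + 1) := by
  rw [zv, Xv]
  have h1 := yv_ne (K := K) (m := m) n
  have h2 := yv_ne (K := K) (m := m) (n+1)
  field_simp

/-- reindex a product over `range m` to a product over `ZMod m`. -/
lemma prod_range_zmod (g : ZMod m → Lm K m) :
    ∏ j ∈ Finset.range m, g (j : ZMod m) = ∏ i : ZMod m, g i := by
  apply Finset.prod_nbij' (fun j => ((j : ℕ) : ZMod m)) (fun i => i.val)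
  · intro a _; exact Finset.mem_univ _
  · intro a _; exact Finset.mem_range.mpr (ZMod.val_lt a)
  · intro a ha; exact ZMod.val_natCast_of_lt (Finset.mem_range.mp ha)
  · intro a _; exact ZMod.natCast_zmod_val a
  · intro a _; rfl

end Aux
section Aux2
set_option linter.unusedSectionVars false
variable {K : Type} [Field K] {m : ℕ} [NeZero m] (F : ZMod m → K)

lemma boldy_ne : boldy K m ≠ 0 :=
  Finset.prod_ne_zero_iff.mpr (fun n _ => yv_ne n)

lemma boldF_ne (hF : ∀ n, F n ≠ 0) : boldF K m F ≠ 0 :=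
  Finset.prod_ne_zero_iff.mpr (fun n _ => Fc_ne F hF n)

lemma boldy_sq_ne : boldy K m * boldy K m ≠ boldF K m F := by
  intro h
  have hb : boldy K m = algebraMap (MvPolynomial (ZMod m) K) (Lm K m)
      (∏ n : ZMod m, MvPolynomial.X n) := by
    rw [boldy, map_prod]
    rfl
  have hFb : boldF K m F = algebraMap (MvPolynomial (ZMod m) K) (Lm K m)
      (MvPolynomial.C (∏ n : ZMod m, F n)) := by
    rw [boldF, map_prod, map_prod]
    apply Finset.prod_congr rfl
    intro n _
    rw [Fc, IsScalarTower.algebraMap_apply K (MvPolynomial (ZMod m) K) (Lm K m)]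
    rfl
  have h' := h
  rw [hb, hFb, ← map_mul] at h'
  have heq := IsFractionRing.injective (MvPolynomial (ZMod m) K) (Lm K m) h'
  have h2 := congrArg MvPolynomial.constantCoeff heq
  rw [map_mul, map_prod] at h2
  simp only [MvPolynomial.constantCoeff_X, MvPolynomial.constantCoeff_C] at h2
  have h3 : (0 : ZMod m) ∈ Finset.univ := Finset.mem_univ _
  rw [Finset.prod_eq_zero h3 rfl, zero_mul] at h2
  have hFF : boldF K m F = 0 := by
    rw [hFb, ← h2]
    simp
  rw [hFF] at h
  exact boldy_ne (mul_self_eq_zero.mp h)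

end Aux2
section Aux3
set_option linter.unusedSectionVars false
variable {K : Type} [Field K] {m : ℕ} [NeZero m] (F : ZMod m → K)

lemma Wv_eq (n : ZMod m) :
    ∏ j ∈ Finset.range m, Xv K m F (n - (j : ZMod m)) = ∏ c : ZMod m, Xv K m F c := by
  rw [prod_range_zmod (fun i => Xv K m F (n - i))]
  exact Fintype.prod_equiv (Equiv.subLeft n) _ _ (fun i => rfl)

lemma Pv_rec (hm : 2 ≤ m) (n : ZMod m) :
    Pv K m F n = 1 + Xv K m F n * Pv K m F (n - 1) - ∏ c : ZMod m, Xv K m F c := by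
  have hmm : m - 1 + 1 = m := by omega
  have hrange : Finset.range (m - 1 + 1) = Finset.range m := by rw [hmm]
  set G : ℕ → Lm K m := fun k => ∏ j ∈ Finset.range (k + 1), Xv K m F (n - (j : ZMod m)) with hGdef
  have hG : ∀ k : ℕ, Xv K m F n * (∏ j ∈ Finset.range (k + 1), Xv K m F (n - 1 - (j : ZMod m)))
      = G (k + 1) := by
    intro k
    rw [hGdef]
    simp only
    rw [Finset.prod_range_succ' (fun j => Xv K m F (n - (j : ZMod m))) (k + 1)]
    rw [mul_comm]
    congr 1
    · apply Finset.prod_congr rfl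
      intro j _
      congr 1
      push_cast
      ring
    · congr 1
      push_cast
      ring
  have hG0 : G 0 = Xv K m F n := by
    rw [hGdef]
    simp
  have hs1 : ∑ k ∈ Finset.range m, G k = (∑ k ∈ Finset.range (m - 1), G (k + 1)) + G 0 := by
    rw [← hrange, Finset.sum_range_succ']
  have hs2 : ∑ k ∈ Finset.range m, G k = (∑ k ∈ Finset.range (m - 1), G k) + G (m - 1) := by
    rw [← hrange, Finset.sum_range_succ]
  have hP : Pv K m F n = 1 + ∑ k ∈ Finset.range (m - 1), G k := rfl
  have hP' : Xv K m F n * Pv K m F (n - 1) = ∑ k ∈ Finset.range m, G k := by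
    rw [Pv, mul_add, mul_one, Finset.mul_sum]
    rw [Finset.sum_congr rfl (fun k _ => hG k), hs1, hG0]
    ring
  have hW : (∏ c : ZMod m, Xv K m F c) = G (m - 1) := by
    rw [← Wv_eq F n, hGdef]
    simp only [hmm]
  rw [hP, hP', hW, hs2]
  ring

lemma Pv_star (hm : 2 ≤ m) (n : ZMod m) :
    Pv K m F n + Xv K m F (n - 1) * Pv K m F (n - 2) =
      (1 + Xv K m F n) * Pv K m F (n - 1) := by
  have h1 := Pv_rec F hm n
  have h2 := Pv_rec F hm (n - 1)
  rw [sub_sub] at h2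
  rw [h1, h2]
  ring

end Aux3
section Aux4
set_option linter.unusedSectionVars false
variable {K : Type} [Field K] {m : ℕ} [NeZero m] (F : ZMod m → K)
variable (σ : Lm K m →ₐ[K] Lm K m)

lemma sigma_Fc (n : ZMod m) : σ (Fc K m F n) = Fc K m F n := σ.commutes (F n)

lemma sigma_ne {x : Lm K m} (hx : x ≠ 0) : σ x ≠ 0 := by
  intro h
  exact hx (σ.toRingHom.injective (h.trans (map_zero σ).symm))

variable (hσ : ∀ n : ZMod m,
      σ (yv K m n) = Pv K m F (n - 2) / Pv K m F (n - 1) * (Fc K m F (n - 1) / yv K m (n - 1)))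

include hσ

lemma Pv_ne (n : ZMod m) : Pv K m F n ≠ 0 := by
  intro hP0
  have h := hσ (n + 2)
  rw [show n + 2 - 2 = n by ring, hP0, zero_div, zero_mul] at h
  exact sigma_ne σ (yv_ne (n + 2)) h

lemma sigma_boldy : σ (boldy K m) = boldF K m F / boldy K m := by
  rw [boldy, map_prod]
  rw [Finset.prod_congr rfl (fun n _ => hσ n)]
  rw [Finset.prod_mul_distrib, Finset.prod_div_distrib, Finset.prod_div_distrib]
  rw [Fintype.prod_equiv (Equiv.subRight (2 : ZMod m)) (fun n => Pv K m F (n - 2)) (Pv K m F)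
    (fun n => rfl)]
  rw [Fintype.prod_equiv (Equiv.subRight (1 : ZMod m)) (fun n => Pv K m F (n - 1)) (Pv K m F)
    (fun n => rfl)]
  rw [Fintype.prod_equiv (Equiv.subRight (1 : ZMod m)) (fun n => Fc K m F (n - 1)) (Fc K m F)
    (fun n => rfl)]
  rw [Fintype.prod_equiv (Equiv.subRight (1 : ZMod m)) (fun n => yv K m (n - 1)) (yv K m)
    (fun n => rfl)]
  rw [div_self (Finset.prod_ne_zero_iff.mpr (fun n _ => Pv_ne F σ hσ n)), one_mul]
  rfl

lemma sigma_z (hm : 2 ≤ m) (hF : ∀ n, F n ≠ 0) (n : ZMod m) : σ (zv K m F n) = zv K m F n := by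
  have hP1 : Pv K m F (n - 1) ≠ 0 := Pv_ne F σ hσ (n - 1)
  have hPn : Pv K m F n ≠ 0 := Pv_ne F σ hσ n
  have hy0 : yv K m (n - 1) ≠ 0 := yv_ne (n - 1)
  have hy1 : yv K m n ≠ 0 := yv_ne n
  have hy2 : yv K m (n + 1) ≠ 0 := yv_ne (n + 1)
  have hFn : Fc K m F n ≠ 0 := Fc_ne F hF n
  have star := Pv_star F hm n
  rw [Xv, Xv, show n - 1 + 1 = n by ring] at star
  rw [zv_eq, map_add, map_div₀, sigma_Fc, hσ n, hσ (n + 1)]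
  rw [show n + 1 - 2 = n - 1 by ring, show n + 1 - 1 = n by ring]
  field_simp
  field_simp at star
  have star3 : (Pv K m F n * yv K m (n - 1) * yv K m n + Fc K m F (n - 1) * Pv K m F (n - 2))
        * yv K m (n + 1)
      = (yv K m n * yv K m (n + 1) + Fc K m F n) * Pv K m F (n - 1) * yv K m (n - 1) := by
    apply mul_left_cancel₀ hy1
    linear_combination yv K m n * star
  linear_combination star3
end Aux4
section Aux5
set_option linter.unusedSectionVars false
variable {K : Type} [Field K] {m : ℕ} [NeZero m] (F : ZMod m → K)

lemma boldy_linear (Z : IntermediateField K (Lm K m)) (hz : ∀ q, zv K m F q ∈ Z)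
    (n : ZMod m) :
    ∃ a b : Lm K m, a ∈ Z ∧ b ∈ Z ∧ boldy K m = a * yv K m n + b := by
  have key : ∀ k : ℕ,
      (∃ a b : Lm K m, a ∈ Z ∧ b ∈ Z ∧
        (∏ j ∈ Finset.range (k + 1), yv K m (n - (j : ZMod m))) = a * yv K m n + b) ∧
      (∃ a b : Lm K m, a ∈ Z ∧ b ∈ Z ∧
        (∏ j ∈ Finset.range (k + 2), yv K m (n - (j : ZMod m))) = a * yv K m n + b) := by
    intro k
    induction k with
    | zero =>
      constructor
      · refine ⟨1, 0, one_mem Z, zero_mem Z, ?_⟩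
        simp
      · refine ⟨zv K m F (n - 1), -(Fc K m F (n - 1)), hz _, neg_mem (Z.algebraMap_mem (F (n-1))), ?_⟩
        rw [Finset.prod_range_succ]
        have h1 : zv K m F (n - 1) = yv K m (n - 1) + Fc K m F (n - 1) / yv K m n := by
          rw [zv_eq, show n - 1 + 1 = n by ring]
        have h0 : ∏ j ∈ Finset.range 1, yv K m (n - (j : ZMod m)) = yv K m n := by simp
        rw [h0, show ((1 : ℕ) : ZMod m) = 1 by push_cast; ring]
        field_simp [yv_ne n] at h1 ⊢
        linear_combination -h1
    | succ k ih =>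
      refine ⟨ih.2, ?_⟩
      obtain ⟨a, b, ha, hb, hab⟩ := ih.1
      obtain ⟨a', b', ha', hb', hab'⟩ := ih.2
      set q : ZMod m := n - ((k : ℕ) + 2 : ℕ) with hq
      refine ⟨zv K m F q * a' - Fc K m F q * a, zv K m F q * b' - Fc K m F q * b,
        sub_mem (mul_mem (hz q) ha') (mul_mem (Z.algebraMap_mem (F q)) ha),
        sub_mem (mul_mem (hz q) hb') (mul_mem (Z.algebraMap_mem (F q)) hb), ?_⟩
      have hzq : zv K m F q = yv K m q + Fc K m F q / yv K m (n - ((k : ℕ) + 1 : ℕ)) := by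
        rw [zv_eq, hq]
        congr 2
        push_cast
        ring
      have hstep : ∏ j ∈ Finset.range (k + 3), yv K m (n - (j : ZMod m))
          = (∏ j ∈ Finset.range (k + 2), yv K m (n - (j : ZMod m))) * yv K m q := by
        rw [Finset.prod_range_succ, hq]
      have hstep' : ∏ j ∈ Finset.range (k + 2), yv K m (n - (j : ZMod m))
          = (∏ j ∈ Finset.range (k + 1), yv K m (n - (j : ZMod m)))
            * yv K m (n - ((k : ℕ) + 1 : ℕ)) := by
        rw [Finset.prod_range_succ]
      have hyk : yv K m (n - ((k : ℕ) + 1 : ℕ)) ≠ 0 := yv_ne _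
      have hcomb : a' * yv K m n + b'
          = (a * yv K m n + b) * yv K m (n - ((k : ℕ) + 1 : ℕ)) := by
        rw [← hab, ← hab']
        exact hstep'
      rw [hstep, hab']
      rw [show yv K m q = zv K m F q - Fc K m F q / yv K m (n - ((k : ℕ) + 1 : ℕ)) by
        rw [hzq]; ring]
      push_cast at hcomb hyk ⊢
      field_simp
      linear_combination (-(Fc K m F q)) * hcomb
  obtain ⟨a, b, ha, hb, hab⟩ := (key (m - 1)).1
  refine ⟨a, b, ha, hb, ?_⟩
  rw [← hab]
  have hmm : m - 1 + 1 = m := Nat.succ_pred_eq_of_pos (NeZero.pos m)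
  rw [show Finset.range (m - 1 + 1) = Finset.range m by rw [hmm]]
  rw [boldy, prod_range_zmod (fun i => yv K m (n - i))]
  exact Fintype.prod_equiv (Equiv.subLeft n) _ _ (fun i => by simp)

end Aux5
set_option maxHeartbeats 1000000 in
set_option synthInstance.maxHeartbeats 400000 in
/-- if `char K ≠ 2` and `σ` is a `K`-algebra endomorphism of `L` with
`σ(y_n) = (P_{n-2}/P_{n-1})·(F_{n-1}/y_{n-1})` for all `n`, then the fixed field of `σ` equals the
subfield `𝒵` generated by `K` and the `z_n`, and `[L : 𝒵] = 2`. -/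
theorem stmt_7 (hm : 2 ≤ m) (hF : ∀ n, F n ≠ 0) (hchar : ringChar K ≠ 2)
    (σ : Lm K m →ₐ[K] Lm K m)
    (hσ : ∀ n : ZMod m,
      σ (yv K m n) = Pv K m F (n - 2) / Pv K m F (n - 1) * (Fc K m F (n - 1) / yv K m (n - 1))) :
    {f : Lm K m | σ f = f} = (IntermediateField.adjoin K (Set.range (zv K m F)) : Set (Lm K m)) ∧
      Module.finrank (IntermediateField.adjoin K (Set.range (zv K m F))) (Lm K m) = 2 := by
  classical
  set Z := IntermediateField.adjoin K (Set.range (zv K m F)) with hZdef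
  have hzZ : ∀ q : ZMod m, zv K m F q ∈ Z := fun q =>
    IntermediateField.subset_adjoin K _ ⟨q, rfl⟩
  -- the fixed intermediate field
  let Fx : IntermediateField K (Lm K m) :=
    { AlgHom.equalizer σ (AlgHom.id K (Lm K m)) with
      inv_mem' := fun x hx => by
        change σ x = x at hx
        change σ x⁻¹ = x⁻¹
        rw [map_inv₀, hx] }
  have hFxmem : ∀ x : Lm K m, x ∈ Fx ↔ σ x = x := fun x => Iff.rfl
  have hZFx : Z ≤ Fx := by
    rw [hZdef, IntermediateField.adjoin_le_iff]
    rintro x ⟨q, rfl⟩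
    exact sigma_z F σ hσ hm hF q
  have hfix : ∀ x ∈ Z, σ x = x := fun x hx => hZFx hx
  have hσy := sigma_boldy F σ hσ
  have hyneq : σ (boldy K m) ≠ boldy K m := by
    rw [hσy]
    intro h
    apply boldy_sq_ne F
    have hb := boldy_ne (K := K) (m := m)
    field_simp at h
    linear_combination -h
  have hlin : ∀ n : ZMod m, ∃ a b : Lm K m, a ∈ Z ∧ b ∈ Z ∧
      boldy K m = a * yv K m n + b ∧ a ≠ 0 := by
    intro n
    obtain ⟨a, b, ha, hb, hab⟩ := boldy_linear F Z hzZ n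
    refine ⟨a, b, ha, hb, hab, ?_⟩
    intro h0
    rw [h0, zero_mul, zero_add] at hab
    apply hyneq
    rw [hab]
    exact hfix b hb
  obtain ⟨a0, b0, ha0, hb0, hab0, ha0ne⟩ := hlin 0
  have hy0nf : σ (yv K m 0) ≠ yv K m 0 := by
    intro h
    apply hyneq
    rw [hab0, map_add, map_mul, hfix a0 ha0, hfix b0 hb0, h]
  have hy0Z : yv K m 0 ∉ Z := fun h => hy0nf (hfix _ h)
  -- y1 is Z-linear in y0
  obtain ⟨a1, b1, ha1, hb1, hab1, ha1ne⟩ := hlin 1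
  have hy1' : a1 * yv K m 1 = a0 * yv K m 0 + (b0 - b1) := by
    linear_combination hab0 - hab1
  -- quadratic relation for y0
  have hquad : ∃ s t : Lm K m, s ∈ Z ∧ t ∈ Z ∧
      yv K m 0 * yv K m 0 = s * yv K m 0 + t := by
    have hz0 := zv_eq F (0 : ZMod m)
    rw [zero_add] at hz0
    have hy1ne : yv K m 1 ≠ 0 := yv_ne 1
    have hz0' : zv K m F 0 * yv K m 1 = yv K m 0 * yv K m 1 + Fc K m F 0 := by
      field_simp [hy1ne] at hz0 ⊢
      linear_combination hz0
    have comb : zv K m F 0 * (a0 * yv K m 0 + (b0 - b1))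
        = yv K m 0 * (a0 * yv K m 0 + (b0 - b1)) + a1 * Fc K m F 0 := by
      linear_combination a1 * hz0' - (zv K m F 0 - yv K m 0) * hy1'
    refine ⟨(zv K m F 0 * a0 - (b0 - b1)) / a0, (zv K m F 0 * (b0 - b1) - a1 * Fc K m F 0) / a0,
      div_mem (sub_mem (mul_mem (hzZ 0) ha0) (sub_mem hb0 hb1)) ha0,
      div_mem (sub_mem (mul_mem (hzZ 0) (sub_mem hb0 hb1)) (mul_mem ha1 (Z.algebraMap_mem (F 0)))) ha0,
      ?_⟩
    field_simp
    linear_combination -comb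
  obtain ⟨s, t, hsZ, htZ, hst⟩ := hquad
  -- the set of Z-linear expressions in y0
  set N : Set (Lm K m) := {x | ∃ a b : Lm K m, a ∈ Z ∧ b ∈ Z ∧ x = a + b * yv K m 0} with hNdef
  have hNmul : ∀ x ∈ N, ∀ y ∈ N, x * y ∈ N := by
    rintro x ⟨a, b, ha, hb, rfl⟩ y ⟨a', b', ha', hb', rfl⟩
    refine ⟨a * a' + b * b' * t, a * b' + b * a' + b * b' * s,
      add_mem (mul_mem ha ha') (mul_mem (mul_mem hb hb') htZ),
      add_mem (add_mem (mul_mem ha hb') (mul_mem hb ha')) (mul_mem (mul_mem hb hb') hsZ), ?_⟩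
    linear_combination b * b' * hst
  have hNy : ∀ n : ZMod m, yv K m n ∈ N := by
    intro n
    obtain ⟨a, b, ha, hb, hab, hane⟩ := hlin n
    refine ⟨(b0 - b) / a, (a0 / a), div_mem (sub_mem hb0 hb) ha, div_mem ha0 ha, ?_⟩
    field_simp
    linear_combination hab0 - hab
  have hNinv : ∀ x ∈ N, x ≠ 0 → x⁻¹ ∈ N := by
    rintro x ⟨a, b, ha, hb, rfl⟩ hne
    by_cases hbz : b = 0
    · rw [hbz, zero_mul, add_zero] at hne ⊢
      exact ⟨a⁻¹, 0, inv_mem ha, zero_mem Z, by simp⟩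
    · set Nm := a * (a + b * s) - b * b * t with hNm
      have hNmZ : Nm ∈ Z := sub_mem (mul_mem ha (add_mem ha (mul_mem hb hsZ)))
        (mul_mem (mul_mem hb hb) htZ)
      have hNmne : Nm ≠ 0 := by
        intro h0
        have hfac : (a + b * yv K m 0) * ((a + b * s) - b * yv K m 0) = Nm := by
          linear_combination (-(b * b)) * hst
        rw [h0] at hfac
        rcases mul_eq_zero.mp hfac with h1 | h2
        · exact hne h1
        · apply hy0Z
          have : yv K m 0 = (a + b * s) / b := by
            field_simp
            linear_combination -h2
          rw [this]
          exact div_mem (add_mem ha (mul_mem hb hsZ)) hb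
      refine ⟨(a + b * s) / Nm, -b / Nm, div_mem (add_mem ha (mul_mem hb hsZ)) hNmZ,
        div_mem (neg_mem hb) hNmZ, ?_⟩
      refine inv_eq_of_mul_eq_one_right ?_
      field_simp
      linear_combination (-(b * b)) * hst
  have hNall : ∀ x : Lm K m, x ∈ N := by
    have hpoly : ∀ p : MvPolynomial (ZMod m) K,
        algebraMap (MvPolynomial (ZMod m) K) (Lm K m) p ∈ N := by
      intro p
      induction p using MvPolynomial.induction_on with
      | C A =>
        refine ⟨algebraMap (MvPolynomial (ZMod m) K) (Lm K m) (MvPolynomial.C A), 0, ?_,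
          zero_mem Z, by ring⟩
        rw [← MvPolynomial.algebraMap_eq,
          ← IsScalarTower.algebraMap_apply K (MvPolynomial (ZMod m) K) (Lm K m)]
        exact Z.algebraMap_mem A
      | add p q hp hq =>
        rw [map_add]
        obtain ⟨a, b, ha, hb, hab⟩ := hp
        obtain ⟨a', b', ha', hb', hab'⟩ := hq
        exact ⟨a + a', b + b', add_mem ha ha', add_mem hb hb', by rw [hab, hab']; ring⟩
      | mul_X p n hp =>
        rw [map_mul]
        exact hNmul _ hp _ (hNy n)
    intro x
    obtain ⟨p, q, hq, hpq⟩ := IsFractionRing.div_surjective (A := MvPolynomial (ZMod m) K) x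
    have hqne : algebraMap (MvPolynomial (ZMod m) K) (Lm K m) q ≠ 0 :=
      IsFractionRing.to_map_ne_zero_of_mem_nonZeroDivisors hq
    rw [← hpq, div_eq_mul_inv]
    exact hNmul _ (hpoly p) _ (hNinv _ (hpoly q) hqne)
  constructor
  · ext f
    simp only [Set.mem_setOf_eq, SetLike.mem_coe]
    constructor
    · intro hf
      obtain ⟨a, b, ha, hb, rfl⟩ := hNall f
      by_cases hbz : b = 0
      · rw [hbz, zero_mul, add_zero] at *
        exact ha
      · exfalso
        apply hy0nf
        have hrep : yv K m 0 = (a + b * yv K m 0 - a) * b⁻¹ := by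
          field_simp
          ring
        calc σ (yv K m 0) = σ ((a + b * yv K m 0 - a) * b⁻¹) := by rw [← hrep]
          _ = (σ (a + b * yv K m 0) - σ a) * (σ b)⁻¹ := by
              rw [map_mul, map_sub, map_inv₀]
          _ = (a + b * yv K m 0 - a) * b⁻¹ := by rw [hf, hfix a ha, hfix b hb]
          _ = yv K m 0 := hrep.symm
    · exact fun hf => hfix f hf
  · have hli : LinearIndependent (↥Z) ![yv K m 0, (1 : Lm K m)] := by
      rw [linearIndependent_fin2]
      refine ⟨by simp, ?_⟩
      intro a h
      apply hy0Z
      simp only [Matrix.cons_val_one, Matrix.head_cons, Matrix.cons_val_zero] at h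
      rw [← h, Algebra.smul_def, mul_one]
      exact a.2
    have hsp : ⊤ ≤ Submodule.span (↥Z) (Set.range ![yv K m 0, (1 : Lm K m)]) := by
      intro x _
      obtain ⟨a, b, ha, hb, rfl⟩ := hNall x
      have hrange : Set.range ![yv K m 0, (1 : Lm K m)] = {yv K m 0, (1 : Lm K m)} := by
        simp [Matrix.range_cons, Matrix.range_empty, Set.pair_comm]
      rw [hrange, Submodule.mem_span_pair]
      refine ⟨⟨b, hb⟩, ⟨a, ha⟩, ?_⟩
      rw [Algebra.smul_def, Algebra.smul_def, mul_one]
      simp only [IntermediateField.algebraMap_apply]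
      ring
    rw [Module.finrank_eq_card_basis (Module.Basis.mk hli hsp)]
    simp
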